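/- Let μ = Σ_{n=0}^∞ (3^{-n} δ_{-2^{-n}} + 2^{-n} δ_{2^{-n}}) be the finite Borel measure on ℝ fully supported on X = {0} ∪ ⋃_{n=0}^∞ {2^{-n}, -2^{-n}}. Then the upper Minkowski dimension of μ satisfies \overline{dim}_M μ ≥ log 3/log 2, while dim_A(μ,x) = 0 for every x ∈ X \ {0} and dim_A(μ,0) ≤ 1. In particular sup_{x∈X} dim_A(μ,x) ≤ 1 < log 3/log 2 ≤ \overline{dim}_M μ. -/

import Mathlib

open MeasureTheory Metric Set
open scoped NNReal ENNReal

/-- The pointwise Assouad dimension of a measure `μ` at a point `x`. -/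
noncomputable def pwAssouadDim {X : Type*} [PseudoMetricSpace X] [MeasurableSpace X]
    (μ : Measure X) (x : X) : ℝ≥0∞ :=
  sInf (ENNReal.ofReal '' {s : ℝ | 0 < s ∧ ∃ C : ℝ, 0 < C ∧ ∀ r R : ℝ, 0 < r → r < R →
    μ (closedBall x R) ≤ ENNReal.ofReal (C * (R / r) ^ s) * μ (closedBall x r)})

/-- The upper Minkowski dimension of a measure `μ` with support `F`:
`inf {s > 0 : ∃ c > 0, μ(B(x,r)) ≥ c r^s for all x ∈ F and 0 < r < 1}`. -/
noncomputable def upperMinkowskiDimOn (μ : Measure ℝ) (F : Set ℝ) : ℝ≥0∞ :=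
  sInf (ENNReal.ofReal '' {s : ℝ | 0 < s ∧ ∃ c : ℝ, 0 < c ∧ ∀ x ∈ F, ∀ r : ℝ, 0 < r → r < 1 →
    ENNReal.ofReal (c * r ^ s) ≤ μ (closedBall x r)})

/-- The measure `μ = Σ_{n=0}^∞ (3^{-n} δ_{-2^{-n}} + 2^{-n} δ_{2^{-n}})` on `ℝ`. -/
noncomputable def nuEx : Measure ℝ :=
  Measure.sum fun n : ℕ =>
    ((3 : ℝ≥0∞)⁻¹ ^ n • Measure.dirac (-((2 : ℝ)⁻¹ ^ n))) +
    ((2 : ℝ≥0∞)⁻¹ ^ n • Measure.dirac ((2 : ℝ)⁻¹ ^ n))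

/-- The support `X = {0} ∪ ⋃_{n=0}^∞ {2^{-n}, -2^{-n}}` of `nuEx`. -/
def XEx : Set ℝ := {0} ∪ ⋃ n : ℕ, {(2 : ℝ)⁻¹ ^ n, -((2 : ℝ)⁻¹ ^ n)}

lemma two_inv_pow_eq (n : ℕ) : ((2:ℝ≥0∞)⁻¹)^n = ENNReal.ofReal ((2⁻¹:ℝ)^n) := by
  rw [ENNReal.ofReal_pow (by norm_num), ENNReal.ofReal_inv_of_pos (by norm_num)]
  norm_num

lemma three_inv_pow_eq (n : ℕ) : ((3:ℝ≥0∞)⁻¹)^n = ENNReal.ofReal ((3⁻¹:ℝ)^n) := by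
  rw [ENNReal.ofReal_pow (by norm_num), ENNReal.ofReal_inv_of_pos (by norm_num)]
  norm_num

lemma nuEx_apply {B : Set ℝ} (hB : MeasurableSet B) :
    nuEx B = ∑' n : ℕ, (((3:ℝ≥0∞)⁻¹^n) * B.indicator 1 (-((2:ℝ)⁻¹^n)) +
      ((2:ℝ≥0∞)⁻¹^n) * B.indicator 1 ((2:ℝ)⁻¹^n)) := by
  rw [nuEx, Measure.sum_apply _ hB]
  congr 1; ext n
  rw [Measure.add_apply, Measure.smul_apply, Measure.smul_apply,
    Measure.dirac_apply' _ hB, Measure.dirac_apply' _ hB, smul_eq_mul, smul_eq_mul]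

lemma nuEx_ge_neg (n : ℕ) {s : Set ℝ} (h : -((2:ℝ)⁻¹^n) ∈ s) : (3:ℝ≥0∞)⁻¹^n ≤ nuEx s := by
  calc (3:ℝ≥0∞)⁻¹^n = ((3 : ℝ≥0∞)⁻¹ ^ n • Measure.dirac (-((2 : ℝ)⁻¹ ^ n))) s := by
        rw [Measure.smul_apply, Measure.dirac_apply_of_mem h, smul_eq_mul, mul_one]
    _ ≤ (((3 : ℝ≥0∞)⁻¹ ^ n • Measure.dirac (-((2 : ℝ)⁻¹ ^ n))) +
        ((2 : ℝ≥0∞)⁻¹ ^ n • Measure.dirac ((2 : ℝ)⁻¹ ^ n))) s := by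
        rw [Measure.add_apply]; exact le_self_add
    _ ≤ nuEx s := Measure.le_sum _ n s

lemma nuEx_ge_pos (n : ℕ) {s : Set ℝ} (h : (2:ℝ)⁻¹^n ∈ s) : (2:ℝ≥0∞)⁻¹^n ≤ nuEx s := by
  calc (2:ℝ≥0∞)⁻¹^n = (((2 : ℝ≥0∞)⁻¹ ^ n) • Measure.dirac ((2 : ℝ)⁻¹ ^ n)) s := by
        rw [Measure.smul_apply, Measure.dirac_apply_of_mem h, smul_eq_mul, mul_one]
    _ ≤ (((3 : ℝ≥0∞)⁻¹ ^ n • Measure.dirac (-((2 : ℝ)⁻¹ ^ n))) +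
        ((2 : ℝ≥0∞)⁻¹ ^ n • Measure.dirac ((2 : ℝ)⁻¹ ^ n))) s := by
        rw [Measure.add_apply]; exact le_add_self
    _ ≤ nuEx s := Measure.le_sum _ n s

lemma tsum_two_inv : ∑' n : ℕ, ((2:ℝ≥0∞)⁻¹)^n = 2 := by
  rw [ENNReal.tsum_geometric, ENNReal.one_sub_inv_two, inv_inv]

lemma nuEx_le_four (s : Set ℝ) : nuEx s ≤ 4 := by
  have h := nuEx_apply (B := (univ : Set ℝ)) MeasurableSet.univ
  have : nuEx s ≤ nuEx univ := measure_mono (subset_univ s)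
  refine this.trans ?_
  rw [h]
  calc ∑' n : ℕ, (((3:ℝ≥0∞)⁻¹^n) * (univ : Set ℝ).indicator 1 (-((2:ℝ)⁻¹^n)) +
      ((2:ℝ≥0∞)⁻¹^n) * (univ : Set ℝ).indicator 1 ((2:ℝ)⁻¹^n))
      ≤ ∑' n : ℕ, (2 * ((2:ℝ≥0∞)⁻¹)^n) := by
        refine ENNReal.tsum_le_tsum fun n => ?_
        simp only [indicator_univ, Pi.one_apply, mul_one, two_mul]
        have h3 : ((3:ℝ≥0∞)⁻¹)^n ≤ ((2:ℝ≥0∞)⁻¹)^n :=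
          pow_le_pow_left₀ (zero_le) (by norm_num [ENNReal.inv_le_inv]) n
        exact add_le_add h3 le_rfl
    _ = 2 * 2 := by rw [ENNReal.tsum_mul_left, tsum_two_inv]
    _ = 4 := by norm_num

-- existence of minimal N with 2⁻¹^N ≤ r
lemma exists_pow_le {r : ℝ} (h0 : 0 < r) : ∃ n : ℕ, (2⁻¹:ℝ)^n ≤ r := by
  obtain ⟨n, hn⟩ := exists_pow_lt_of_lt_one h0 (by norm_num : (2⁻¹:ℝ) < 1)
  exact ⟨n, hn.le⟩

lemma nuEx_ball_zero_lower {r : ℝ} (h0 : 0 < r) (h1 : r < 1) :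
    ENNReal.ofReal (r/2) ≤ nuEx (closedBall 0 r) := by
  classical
  have hex := exists_pow_le h0
  set N := Nat.find hex with hN
  have hNle : (2⁻¹:ℝ)^N ≤ r := Nat.find_spec hex
  have hNpos : N ≠ 0 := by
    intro h
    rw [h] at hNle; simp at hNle; linarith
  have hprev : ¬ ((2⁻¹:ℝ)^(N-1) ≤ r) := Nat.find_min hex (by omega)
  push_neg at hprev
  have hhalf : r/2 < (2⁻¹:ℝ)^N := by
    have : (2⁻¹:ℝ)^N = (2⁻¹:ℝ)^(N-1) * 2⁻¹ := by
      rw [← pow_succ]; congr 1; omega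
    rw [this]; nlinarith
  have hmem : (2:ℝ)⁻¹^N ∈ closedBall (0:ℝ) r := by
    simp only [mem_closedBall, Real.dist_eq, sub_zero,
      abs_of_pos (pow_pos (by norm_num : (0:ℝ) < 2⁻¹) N)]
    exact hNle
  calc ENNReal.ofReal (r/2) ≤ ENNReal.ofReal ((2⁻¹:ℝ)^N) := ENNReal.ofReal_le_ofReal hhalf.le
    _ = (2:ℝ≥0∞)⁻¹^N := (two_inv_pow_eq N).symm
    _ ≤ nuEx (closedBall 0 r) := nuEx_ge_pos N hmem

lemma nuEx_ball_zero_upper {R : ℝ} (h0 : 0 < R) (h1 : R < 1) :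
    nuEx (closedBall 0 R) ≤ ENNReal.ofReal (4*R) := by
  classical
  have hex := exists_pow_le h0
  set N := Nat.find hex with hN
  have hNle : (2⁻¹:ℝ)^N ≤ R := Nat.find_spec hex
  rw [nuEx_apply (measurableSet_closedBall)]
  set f : ℕ → ℝ≥0∞ := fun n => (((3:ℝ≥0∞)⁻¹^n) * (closedBall (0:ℝ) R).indicator 1 (-((2:ℝ)⁻¹^n)) +
      ((2:ℝ≥0∞)⁻¹^n) * (closedBall (0:ℝ) R).indicator 1 ((2:ℝ)⁻¹^n)) with hf
  have hzero : ∀ m < N, f m = 0 := by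
    intro m hm
    have hmR : ¬ ((2⁻¹:ℝ)^m ≤ R) := Nat.find_min hex hm
    push_neg at hmR
    have h1' : -((2:ℝ)⁻¹^m) ∉ closedBall (0:ℝ) R := by
      simp only [mem_closedBall, Real.dist_eq, sub_zero, abs_neg,
        abs_of_pos (pow_pos (by norm_num : (0:ℝ) < 2⁻¹) m)]
      linarith
    have h2' : ((2:ℝ)⁻¹^m) ∉ closedBall (0:ℝ) R := by
      simp only [mem_closedBall, Real.dist_eq, sub_zero,
        abs_of_pos (pow_pos (by norm_num : (0:ℝ) < 2⁻¹) m)]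
      linarith
    simp only [hf, indicator_of_notMem h1', indicator_of_notMem h2', mul_zero, add_zero]
  have hle : ∀ m, f m ≤ 2 * ((2:ℝ≥0∞)⁻¹)^m := by
    intro m
    have h3 : ((3:ℝ≥0∞)⁻¹)^m ≤ ((2:ℝ≥0∞)⁻¹)^m :=
      pow_le_pow_left₀ (zero_le) (by norm_num [ENNReal.inv_le_inv]) m
    have hi : ∀ x : ℝ, (closedBall (0:ℝ) R).indicator (1 : ℝ → ℝ≥0∞) x ≤ 1 := by
      intro x; classical
      by_cases h : x ∈ closedBall (0:ℝ) R <;> simp [h]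
    calc f m ≤ ((3:ℝ≥0∞)⁻¹^m) * 1 + ((2:ℝ≥0∞)⁻¹^m) * 1 := by
          refine add_le_add ?_ ?_ <;> exact mul_le_mul_right (hi _) _
      _ = ((3:ℝ≥0∞)⁻¹^m) + ((2:ℝ≥0∞)⁻¹^m) := by rw [mul_one, mul_one]
      _ ≤ 2 * ((2:ℝ≥0∞)⁻¹)^m := by rw [two_mul]; exact add_le_add h3 le_rfl
  calc ∑' m, f m = ∑ i ∈ Finset.range N, f i + ∑' (i:ℕ), f (i + N) :=
        (Summable.sum_add_tsum_nat_add' ENNReal.summable).symm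
    _ = ∑' (i:ℕ), f (i + N) := by
        rw [Finset.sum_eq_zero (fun i hi => hzero i (Finset.mem_range.mp hi)), zero_add]
    _ ≤ ∑' (i:ℕ), 2 * ((2:ℝ≥0∞)⁻¹)^(i+N) := ENNReal.tsum_le_tsum fun i => hle _
    _ = ∑' (i:ℕ), (2 * ((2:ℝ≥0∞)⁻¹)^N) * ((2:ℝ≥0∞)⁻¹)^i :=
        tsum_congr (fun i => by rw [pow_add]; ring)
    _ = (2 * ((2:ℝ≥0∞)⁻¹)^N) * ∑' (i:ℕ), ((2:ℝ≥0∞)⁻¹)^i := ENNReal.tsum_mul_left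
    _ = 4 * ((2:ℝ≥0∞)⁻¹)^N := by rw [tsum_two_inv]; ring
    _ ≤ ENNReal.ofReal (4*R) := by
        rw [two_inv_pow_eq, ← ENNReal.ofReal_ofNat 4, ← ENNReal.ofReal_mul (by norm_num)]
        exact ENNReal.ofReal_le_ofReal (by linarith)

lemma nuEx_ball_zero_big {r : ℝ} (h : 1 ≤ r) :
    nuEx (closedBall 0 r) = nuEx univ := by
  rw [nuEx_apply measurableSet_closedBall, nuEx_apply MeasurableSet.univ]
  refine tsum_congr fun n => ?_
  have hp : (0:ℝ) < (2:ℝ)⁻¹^n := pow_pos (by norm_num) n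
  have hle : (2:ℝ)⁻¹^n ≤ 1 := pow_le_one₀ (by norm_num) (by norm_num)
  have h1 : -((2:ℝ)⁻¹^n) ∈ closedBall (0:ℝ) r := by
    simp only [mem_closedBall, Real.dist_eq, sub_zero, abs_neg, abs_of_pos hp]
    linarith
  have h2 : ((2:ℝ)⁻¹^n) ∈ closedBall (0:ℝ) r := by
    simp only [mem_closedBall, Real.dist_eq, sub_zero, abs_of_pos hp]
    linarith
  rw [indicator_of_mem h1, indicator_of_mem h2]; simp

lemma nuEx_pointmass (n : ℕ) :
    nuEx (closedBall (-((2:ℝ)⁻¹^n)) ((2:ℝ)⁻¹^n/4)) = (3:ℝ≥0∞)⁻¹^n := by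
  set x : ℝ := -((2:ℝ)⁻¹^n) with hx
  set r : ℝ := (2:ℝ)⁻¹^n/4 with hr
  have hp : ∀ m : ℕ, (0:ℝ) < (2:ℝ)⁻¹^m := fun m => pow_pos (by norm_num) m
  rw [nuEx_apply measurableSet_closedBall]
  rw [tsum_eq_single n ?_]
  · have h1 : x ∈ closedBall x r := mem_closedBall_self (by positivity)
    have h2 : ((2:ℝ)⁻¹^n) ∉ closedBall x r := by
      simp only [mem_closedBall, Real.dist_eq, hx, hr, sub_neg_eq_add]
      rw [abs_of_pos (by positivity)]
      intro hcon
      nlinarith [hp n]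
    rw [← hx, indicator_of_mem h1, indicator_of_notMem h2, Pi.one_apply,
      mul_one, mul_zero, add_zero]
  · intro m hm
    have h1 : -((2:ℝ)⁻¹^m) ∉ closedBall x r := by
      simp only [mem_closedBall, Real.dist_eq, hx, hr]
      intro hcon
      rw [neg_sub_neg, abs_le] at hcon
      rcases Nat.lt_or_ge m n with hlt | hge
      · have hab : (2:ℝ)⁻¹^n ≤ (2:ℝ)⁻¹^m * 2⁻¹ := by
          rw [← pow_succ]
          exact pow_le_pow_of_le_one (by norm_num) (by norm_num) (by omega)
        have := hp n
        linarith [hcon.1]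
      · have hgt : n < m := lt_of_le_of_ne hge (fun h => hm h.symm)
        have hab : (2:ℝ)⁻¹^m ≤ (2:ℝ)⁻¹^n * 2⁻¹ := by
          rw [← pow_succ]
          exact pow_le_pow_of_le_one (by norm_num) (by norm_num) (by omega)
        have := hp n
        linarith [hcon.2]
    have h2 : ((2:ℝ)⁻¹^m) ∉ closedBall x r := by
      simp only [mem_closedBall, Real.dist_eq, hx, hr, sub_neg_eq_add]
      rw [abs_of_pos (by positivity)]
      intro hcon
      nlinarith [hp m, hp n]
    rw [indicator_of_notMem h1, indicator_of_notMem h2, mul_zero, mul_zero, add_zero]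

lemma part1 : ENNReal.ofReal (Real.log 3 / Real.log 2) ≤ upperMinkowskiDimOn nuEx XEx := by
  refine le_sInf ?_
  rintro b ⟨s, ⟨hs, c, hc, hcond⟩, rfl⟩
  refine ENNReal.ofReal_le_ofReal ?_
  -- key : ∀ n, c * (2⁻¹^n/4)^s ≤ 3⁻¹^n
  have key : ∀ n : ℕ, c * ((2⁻¹:ℝ)^n/4) ^ s ≤ (3⁻¹:ℝ)^n := by
    intro n
    have hp : (0:ℝ) < (2:ℝ)⁻¹^n := pow_pos (by norm_num) n
    have hmem : -((2:ℝ)⁻¹^n) ∈ XEx := by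
      refine Or.inr (mem_iUnion.mpr ⟨n, ?_⟩)
      right; rfl
    have hr0 : (0:ℝ) < (2⁻¹:ℝ)^n/4 := by positivity
    have hr1 : (2⁻¹:ℝ)^n/4 < 1 := by
      have : (2⁻¹:ℝ)^n ≤ 1 := pow_le_one₀ (by norm_num) (by norm_num)
      linarith
    have h := hcond _ hmem _ hr0 hr1
    rw [nuEx_pointmass n, three_inv_pow_eq n] at h
    exact (ENNReal.ofReal_le_ofReal_iff (by positivity)).mp h
  -- reduce to 3 * (2⁻¹)^s ≤ 1
  set a : ℝ := (2⁻¹:ℝ) ^ s with ha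
  have ha0 : 0 < a := Real.rpow_pos_of_pos (by norm_num) s
  have hK0 : (0:ℝ) < (4⁻¹:ℝ) ^ s := Real.rpow_pos_of_pos (by norm_num) s
  have key2 : ∀ n : ℕ, (c * (4⁻¹:ℝ)^s) * (3*a)^n ≤ 1 := by
    intro n
    have h := key n
    have hsplit : ((2⁻¹:ℝ)^n/4) ^ s = ((2⁻¹:ℝ)^n)^s * (4⁻¹:ℝ)^s := by
      rw [div_eq_mul_inv, Real.mul_rpow (by positivity) (by norm_num)]
    have hpow : ((2⁻¹:ℝ)^n)^s = a^n := by
      rw [← Real.rpow_natCast (2⁻¹:ℝ) n, ← Real.rpow_mul (by norm_num), mul_comm,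
        Real.rpow_mul (by norm_num), Real.rpow_natCast]
    rw [hsplit, hpow] at h
    have h3 : (0:ℝ) < 3^n := by positivity
    have : c * (a^n * (4⁻¹:ℝ)^s) * 3^n ≤ (3⁻¹:ℝ)^n * 3^n :=
      mul_le_mul_of_nonneg_right h h3.le
    calc (c * (4⁻¹:ℝ)^s) * (3*a)^n = c * (a^n * (4⁻¹:ℝ)^s) * 3^n := by
          rw [mul_pow]; ring
      _ ≤ (3⁻¹:ℝ)^n * 3^n := this
      _ = 1 := by rw [← mul_pow]; norm_num
  have h3a : 3 * a ≤ 1 := by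
    by_contra hcon
    push_neg at hcon
    obtain ⟨n, hn⟩ := pow_unbounded_of_one_lt ((c * (4⁻¹:ℝ)^s)⁻¹) hcon
    have hck : 0 < c * (4⁻¹:ℝ)^s := by positivity
    have h1 := key2 n
    have h2 : (c * (4⁻¹:ℝ)^s) * ((c * (4⁻¹:ℝ)^s)⁻¹) < (c * (4⁻¹:ℝ)^s) * (3*a)^n :=
      mul_lt_mul_of_pos_left hn hck
    rw [mul_inv_cancel₀ hck.ne'] at h2
    linarith
  -- conclude s ≥ log 3 / log 2
  have hlog2 : 0 < Real.log 2 := Real.log_pos (by norm_num)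
  have hloga : Real.log a = -(s * Real.log 2) := by
    rw [ha, Real.log_rpow (by norm_num), Real.log_inv]; ring
  have hale : a ≤ 3⁻¹ := by linarith
  have := Real.log_le_log ha0 hale
  rw [hloga, Real.log_inv] at this
  rw [div_le_iff₀ hlog2]
  linarith

lemma ofReal_four : (4:ℝ≥0∞) = ENNReal.ofReal 4 := by
  rw [ENNReal.ofReal_ofNat]

lemma part2 : ∀ x ∈ XEx \ {0}, pwAssouadDim nuEx x = 0 := by
  rintro x ⟨hx, _⟩
  -- extract n and the atom bound
  have hatom : ∃ n : ℕ, (3:ℝ≥0∞)⁻¹^n ≤ nuEx {x} := by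
    rcases hx with h0 | hU
    · exfalso; exact ‹x ∉ ({0}:Set ℝ)› h0
    · obtain ⟨n, hn⟩ := mem_iUnion.mp hU
      rcases hn with h | h
      · refine ⟨n, ?_⟩
        have := nuEx_ge_pos n (s := {x}) (by rw [h]; exact rfl)
        refine le_trans ?_ this
        exact pow_le_pow_left₀ (zero_le) (by norm_num [ENNReal.inv_le_inv]) n
      · refine ⟨n, ?_⟩
        exact nuEx_ge_neg n (s := {x}) (by rw [mem_singleton_iff.mp h]; exact rfl)
  obtain ⟨n, hn⟩ := hatom
  have hball : ∀ r : ℝ, 0 < r → ENNReal.ofReal ((3⁻¹:ℝ)^n) ≤ nuEx (closedBall x r) := by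
    intro r hr
    rw [← three_inv_pow_eq]
    exact hn.trans (measure_mono (singleton_subset_iff.mpr (mem_closedBall_self hr.le)))
  -- membership of every s > 0
  have hmem : ∀ s : ℝ, 0 < s → pwAssouadDim nuEx x ≤ ENNReal.ofReal s := by
    intro s hs
    refine sInf_le ⟨s, ⟨hs, 4 * 3^n, by positivity, ?_⟩, rfl⟩
    intro r R hr hrR
    have h1 : (1:ℝ) ≤ (R/r) ^ s :=
      Real.one_le_rpow (by rw [le_div_iff₀ hr]; linarith) hs.le
    calc nuEx (closedBall x R) ≤ 4 := nuEx_le_four _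
      _ = ENNReal.ofReal (4 * 3^n) * ENNReal.ofReal ((3⁻¹:ℝ)^n) := by
          rw [← ENNReal.ofReal_mul (by positivity), ofReal_four]
          congr 1
          rw [mul_assoc, ← mul_pow]
          norm_num
      _ ≤ ENNReal.ofReal (4 * 3^n * (R/r)^s) * nuEx (closedBall x r) := by
          refine mul_le_mul' (ENNReal.ofReal_le_ofReal ?_) (hball r hr)
          nlinarith [pow_pos (by norm_num : (0:ℝ) < 3) n]
  -- conclude
  refine le_antisymm ?_ (zero_le)
  refine ENNReal.le_of_forall_pos_le_add fun ε hε _ => ?_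
  rw [zero_add]
  calc pwAssouadDim nuEx x ≤ ENNReal.ofReal (ε:ℝ) := hmem _ (by exact_mod_cast hε)
    _ = (ε : ℝ≥0∞) := ENNReal.ofReal_coe_nnreal

lemma part3 : pwAssouadDim nuEx 0 ≤ 1 := by
  have hmem : ∀ s : ℝ, 1 < s → pwAssouadDim nuEx (0:ℝ) ≤ ENNReal.ofReal s := by
    intro s hs
    refine sInf_le ⟨s, ⟨by linarith, 8, by norm_num, ?_⟩, rfl⟩
    intro r R hr hrR
    have hRr1 : (1:ℝ) ≤ R / r := by rw [le_div_iff₀ hr]; linarith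
    have hRr : (R/r) ≤ (R/r) ^ s := by
      nth_rewrite 1 [← Real.rpow_one (R/r)]
      exact Real.rpow_le_rpow_of_exponent_le hRr1 hs.le
    have h1 : (1:ℝ) ≤ (R/r) ^ s := le_trans hRr1 hRr
    rcases le_or_gt 1 r with h1r | hr1
    · -- r ≥ 1
      have hR1 : (1:ℝ) ≤ R := by linarith
      calc nuEx (closedBall 0 R) = nuEx univ := nuEx_ball_zero_big hR1
        _ = nuEx (closedBall 0 r) := (nuEx_ball_zero_big h1r).symm
        _ = 1 * nuEx (closedBall 0 r) := (one_mul _).symm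
        _ ≤ ENNReal.ofReal (8 * (R/r)^s) * nuEx (closedBall 0 r) := by
            refine mul_le_mul' ?_ le_rfl
            rw [ENNReal.one_le_ofReal]
            nlinarith
    · -- r < 1
      have hlow := nuEx_ball_zero_lower hr hr1
      have hfinal : ENNReal.ofReal (8 * (R/r)^s) * ENNReal.ofReal (r/2) ≤
          ENNReal.ofReal (8 * (R/r)^s) * nuEx (closedBall 0 r) :=
        mul_le_mul' le_rfl hlow
      rcases le_or_gt 1 R with hR1 | hR1
      · -- R ≥ 1
        have hRr2 : (1:ℝ)/r ≤ (R/r)^s := by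
          refine le_trans ?_ hRr
          gcongr
        calc nuEx (closedBall 0 R) ≤ 4 := nuEx_le_four _
          _ ≤ ENNReal.ofReal (8 * (R/r)^s) * ENNReal.ofReal (r/2) := by
              rw [← ENNReal.ofReal_mul (by positivity), ofReal_four]
              refine ENNReal.ofReal_le_ofReal ?_
              have : 8 * (R/r)^s * (r/2) = 4 * (r * (R/r)^s) := by ring
              rw [this]
              have : (1:ℝ) ≤ r * (R/r)^s := by
                calc (1:ℝ) = r * (1/r) := by field_simp
                  _ ≤ r * (R/r)^s := by
                      refine mul_le_mul_of_nonneg_left hRr2 hr.le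
              linarith
          _ ≤ _ := hfinal
      · -- R < 1
        calc nuEx (closedBall 0 R) ≤ ENNReal.ofReal (4*R) :=
              nuEx_ball_zero_upper (by linarith) hR1
          _ ≤ ENNReal.ofReal (8 * (R/r)^s) * ENNReal.ofReal (r/2) := by
              rw [← ENNReal.ofReal_mul (by positivity)]
              refine ENNReal.ofReal_le_ofReal ?_
              have heq : 8 * (R/r)^s * (r/2) = 4 * (r * (R/r)^s) := by ring
              rw [heq]
              have : r * (R/r) ≤ r * (R/r)^s := mul_le_mul_of_nonneg_left hRr hr.le
              rw [mul_div_cancel₀ _ hr.ne'] at this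
              linarith
          _ ≤ _ := hfinal
  refine ENNReal.le_of_forall_pos_le_add fun ε hε _ => ?_
  calc pwAssouadDim nuEx 0 ≤ ENNReal.ofReal (1 + ε) := hmem _ (by have h : (0:ℝ) < (ε:ℝ) := (by exact_mod_cast hε); linarith)
    _ ≤ 1 + (ε:ℝ≥0∞) := by
        rw [ENNReal.ofReal_add (by norm_num) (by positivity), ENNReal.ofReal_one,
          ENNReal.ofReal_coe_nnreal]

/-- The upper Minkowski dimension of `nuEx` is at least `log 3 / log 2`,
while `dim_A(μ,x) = 0` for every `x ∈ X \ {0}` and `dim_A(μ,0) ≤ 1`; in particular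
`sup_{x ∈ X} dim_A(μ,x) ≤ 1 < log 3 / log 2 ≤ upper Minkowski dimension of μ`. -/
theorem nuEx_minkowski_gt_sup_pwAssouad :
    ENNReal.ofReal (Real.log 3 / Real.log 2) ≤ upperMinkowskiDimOn nuEx XEx ∧
    (∀ x ∈ XEx \ {0}, pwAssouadDim nuEx x = 0) ∧
    pwAssouadDim nuEx 0 ≤ 1 ∧
    (⨆ x ∈ XEx, pwAssouadDim nuEx x) ≤ 1 ∧
    (1 : ℝ≥0∞) < ENNReal.ofReal (Real.log 3 / Real.log 2) := by
  refine ⟨part1, part2, part3, ?_, ?_⟩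
  · refine iSup₂_le fun x hx => ?_
    by_cases hne : x = 0
    · subst hne; exact part3
    · rw [part2 x ⟨hx, hne⟩]; exact zero_le
  · rw [ENNReal.one_lt_ofReal]
    have hlog2 : 0 < Real.log 2 := Real.log_pos (by norm_num)
    exact (one_lt_div hlog2).mpr (Real.log_lt_log (by norm_num) (by norm_num))
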